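/- Suppose k, d are positive integers such that R = 4d²/(k−d²) is an integer. Then there exist positive integers s, v, m such that d = svm/2 and k = s²v(vm² + 4ε)/4, where ε = sgn(k − d²). -/

import Mathlib

/-- Suppose `k, d` are positive integers such that `R = 4d²/(k−d²)` is an integer.
Then there exist positive integers `s, v, m` such that `d = svm/2` and
`k = s²v(vm² + 4ε)/4`, where `ε = sgn(k − d²)`. -/
theorem stmt10 (k d : ℤ) (hk : 0 < k) (hd : 0 < d) (hne : k ≠ d ^ 2)
    (R : ℤ) (hR : R * (k - d ^ 2) = 4 * d ^ 2) :
    ∃ s v m : ℤ, 0 < s ∧ 0 < v ∧ 0 < m ∧ 2 * d = s * v * m ∧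
      4 * k = s ^ 2 * v * (v * m ^ 2 + 4 * (k - d ^ 2).sign) := by
  set D := k - d ^ 2 with hDdef
  set ε := D.sign with hεdef
  have hD0 : D ≠ 0 := sub_ne_zero.mpr hne
  have hRD : R * D = (2 * d) ^ 2 := by rw [hR]; ring
  have hR0 : R ≠ 0 := by
    rintro rfl; rw [zero_mul] at hRD; nlinarith
  have hε : ε = 1 ∨ ε = -1 := by
    rcases hD0.lt_or_gt with h | h
    · right; simp [hεdef, Int.sign_eq_neg_one_iff_neg.mpr h]
    · left; simp [hεdef, Int.sign_eq_one_iff_pos.mpr h]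
  have hε2 : ε * ε = 1 := by rcases hε with h | h <;> simp [h]
  have hεD : 0 < ε * D := by
    rcases hD0.lt_or_gt with h | h
    · rw [hεdef, Int.sign_eq_neg_one_iff_neg.mpr h]; linarith
    · rw [hεdef, Int.sign_eq_one_iff_pos.mpr h]; linarith
  have hprodpos : 0 < R * D := by rw [hRD]; positivity
  have hεR : 0 < ε * R := by nlinarith [hεD, hprodpos, hε2]
  have hgpos : 0 < Int.gcd R D := Int.gcd_pos_of_ne_zero_left D hR0
  set g : ℤ := (Int.gcd R D : ℤ) with hgdef
  have hg0 : 0 < g := by rw [hgdef]; exact_mod_cast hgpos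
  have hgR : g ∣ R := Int.gcd_dvd_left R D
  have hgD : g ∣ D := Int.gcd_dvd_right R D
  obtain ⟨R', hR'⟩ := hgR
  obtain ⟨D', hD'⟩ := hgD
  have hcop : IsCoprime R' D' := by
    rw [Int.isCoprime_iff_gcd_eq_one]
    have h1 : R / g = R' := by rw [hR']; exact Int.mul_ediv_cancel_left _ hg0.ne'
    have h2 : D / g = D' := by rw [hD']; exact Int.mul_ediv_cancel_left _ hg0.ne'
    rw [← h1, ← h2]
    exact Int.gcd_div_gcd_div_gcd hgpos
  have hg2d : g ∣ 2 * d := by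
    rw [← Int.pow_dvd_pow_iff (two_ne_zero), ← hRD, hR', hD']
    exact ⟨R' * D', by ring⟩
  obtain ⟨t, ht⟩ := hg2d
  have htRD : R' * D' = t ^ 2 := by
    have h : g ^ 2 * (R' * D') = g ^ 2 * t ^ 2 := by
      have h2 : (g * R') * (g * D') = (g * t) ^ 2 := by rw [← hR', ← hD', ← ht]; exact hRD
      linear_combination h2
    exact mul_left_cancel₀ (pow_ne_zero 2 hg0.ne') h
  have hεR' : 0 < ε * R' := by
    have h' : 0 < g * (ε * R') := by rw [hR'] at hεR; linarith [hεR]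
    rcases mul_pos_iff.mp h' with ⟨_, h⟩ | ⟨h, _⟩
    · exact h
    · linarith
  have hεD' : 0 < ε * D' := by
    have h' : 0 < g * (ε * D') := by rw [hD'] at hεD; linarith [hεD]
    rcases mul_pos_iff.mp h' with ⟨_, h⟩ | ⟨h, _⟩
    · exact h
    · linarith
  have hcop' : IsCoprime (ε * R') (ε * D') := by
    rcases hε with h | h
    · rw [h]; simpa using hcop
    · rw [h]; simpa using hcop.neg_neg
  have hmul : (ε * R') * (ε * D') = t ^ 2 := by
    rw [show (ε * R') * (ε * D') = (ε * ε) * (R' * D') by ring, hε2, one_mul, htRD]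
  obtain ⟨m0, hm0⟩ := Int.sq_of_isCoprime hcop' hmul
  have hm2 : ε * R' = m0 ^ 2 := by
    rcases hm0 with h | h
    · exact h
    · exfalso; nlinarith [hεR', sq_nonneg m0]
  obtain ⟨s0, hs0⟩ := Int.sq_of_isCoprime hcop'.symm (by rw [mul_comm]; exact hmul)
  have hs2 : ε * D' = s0 ^ 2 := by
    rcases hs0 with h | h
    · exact h
    · exfalso; nlinarith [hεD', sq_nonneg s0]
  have hs0ne : s0 ≠ 0 := by rintro rfl; rw [zero_pow two_ne_zero] at hs2; linarith [hεD']
  have hm0ne : m0 ≠ 0 := by rintro rfl; rw [zero_pow two_ne_zero] at hm2; linarith [hεR']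
  set s := |s0| with hsdef
  set m := |m0| with hmdef
  have hspos : 0 < s := abs_pos.mpr hs0ne
  have hmpos : 0 < m := abs_pos.mpr hm0ne
  have hsq : s ^ 2 = ε * D' := by rw [hsdef, sq_abs, hs2]
  have hmq : m ^ 2 = ε * R' := by rw [hmdef, sq_abs, hm2]
  have key : (s * g * m) ^ 2 = (2 * d) ^ 2 := by
    calc (s * g * m) ^ 2 = s ^ 2 * m ^ 2 * g ^ 2 := by ring
      _ = (ε * D') * (ε * R') * g ^ 2 := by rw [hsq, hmq]
      _ = (ε * ε) * ((g * R') * (g * D')) := by ring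
      _ = (2 * d) ^ 2 := by rw [hε2, ← hR', ← hD', hRD]; ring
  have heq2d : 2 * d = s * g * m := by
    have hfac : (2 * d - s * g * m) * (2 * d + s * g * m) = 0 := by linear_combination -key
    rcases mul_eq_zero.mp hfac with h | h
    · linarith
    · exfalso; nlinarith [hspos, hg0, hmpos, hd, mul_pos (mul_pos hspos hg0) hmpos]
  refine ⟨s, g, m, hspos, hg0, hmpos, heq2d, ?_⟩
  have hDval : D = g * (ε * s ^ 2) := by
    rw [hsq, hD']; linear_combination (-(g * D')) * hε2
  have hkD : k = D + d ^ 2 := by rw [hDdef]; ring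
  linear_combination 4 * hkD + 4 * hDval + (2 * d + s * g * m) * heq2d
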